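/- Let n ≥ 3 and m ≥ 1 be integers, r > 0, A, B ∈ ℝ, and suppose C := r²B² + r((n−2)B² − mA² − 2mAB) ≥ 0. Let k₁, k₂ > 0 and c₁, c₂ ∈ ℝ, and define f(ξ) := k₁e^{Aξ}, φ(ξ) := k₂e^{Bξ}, and h(ξ) := c₁e^{((−rB+√C)/r)ξ} + c₂e^{((−rB−√C)/r)ξ}. Then for every ξ ∈ ℝ: −r f(ξ)φ(ξ)h''(ξ) − 2r f(ξ)φ'(ξ)h'(ξ) + [(n−2)f(ξ)φ''(ξ) − mφ(ξ)f''(ξ) − 2mφ'(ξ)f'(ξ)]·h(ξ) = 0. -/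

import Mathlib

lemma dexp (c a : ℝ) :
    deriv (fun x => c * Real.exp (a * x)) = fun x => (c * a) * Real.exp (a * x) := by
  funext x
  have h : HasDerivAt (fun x => c * Real.exp (a * x)) ((c * a) * Real.exp (a * x)) x := by
    have h1 : HasDerivAt (fun x : ℝ => a * x) a x := by
      simpa using (hasDerivAt_id x).const_mul a
    have h2 := (Real.hasDerivAt_exp (a * x)).comp x h1
    have := h2.const_mul c
    exact this.congr_deriv (by ring)
  exact h.deriv

lemma dexp2 (c₁ a₁ c₂ a₂ : ℝ) :
    deriv (fun x => c₁ * Real.exp (a₁ * x) + c₂ * Real.exp (a₂ * x)) =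
      fun x => (c₁ * a₁) * Real.exp (a₁ * x) + (c₂ * a₂) * Real.exp (a₂ * x) := by
  funext x
  have h1 : HasDerivAt (fun x => c₁ * Real.exp (a₁ * x)) ((c₁ * a₁) * Real.exp (a₁ * x)) x := by
    have : HasDerivAt (fun x : ℝ => a₁ * x) a₁ x := by simpa using (hasDerivAt_id x).const_mul a₁
    have := ((Real.hasDerivAt_exp (a₁ * x)).comp x this).const_mul c₁
    exact this.congr_deriv (by ring)
  have h2 : HasDerivAt (fun x => c₂ * Real.exp (a₂ * x)) ((c₂ * a₂) * Real.exp (a₂ * x)) x := by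
    have : HasDerivAt (fun x : ℝ => a₂ * x) a₂ x := by simpa using (hasDerivAt_id x).const_mul a₂
    have := ((Real.hasDerivAt_exp (a₂ * x)).comp x this).const_mul c₂
    exact this.congr_deriv (by ring)
  exact (h1.add h2).deriv

/-- For `f = k₁e^{Aξ}`, `φ = k₂e^{Bξ}` and
`h = c₁e^{((−rB+√C)/r)ξ} + c₂e^{((−rB−√C)/r)ξ}` with
`C = r²B² + r((n−2)B² − mA² − 2mAB) ≥ 0`, the linear ODE
`−rfφh'' − 2rfφ'h' + [(n−2)fφ'' − mφf'' − 2mφ'f']h = 0` holds on all of `ℝ`. -/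
theorem stmt11 (n m : ℕ) (hn : 3 ≤ n) (hm : 1 ≤ m) (r A B : ℝ) (hr : 0 < r)
    (C : ℝ) (hC : C = r ^ 2 * B ^ 2 + r * ((n - 2 : ℝ) * B ^ 2 - m * A ^ 2 - 2 * m * A * B))
    (hCnonneg : 0 ≤ C)
    (k₁ k₂ : ℝ) (hk₁ : 0 < k₁) (hk₂ : 0 < k₂) (c₁ c₂ : ℝ)
    (f φ h : ℝ → ℝ)
    (hf : ∀ ξ, f ξ = k₁ * Real.exp (A * ξ))
    (hφ : ∀ ξ, φ ξ = k₂ * Real.exp (B * ξ))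
    (hh : ∀ ξ, h ξ = c₁ * Real.exp (((-r * B + Real.sqrt C) / r) * ξ)
                   + c₂ * Real.exp (((-r * B - Real.sqrt C) / r) * ξ)) :
    ∀ ξ : ℝ,
      -r * f ξ * φ ξ * deriv (deriv h) ξ - 2 * r * f ξ * deriv φ ξ * deriv h ξ
        + ((n - 2 : ℝ) * f ξ * deriv (deriv φ) ξ - m * φ ξ * deriv (deriv f) ξ
            - 2 * m * deriv φ ξ * deriv f ξ) * h ξ = 0 := by
  intro ξ
  have hfe : f = fun ξ => k₁ * Real.exp (A * ξ) := funext hf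
  have hφe : φ = fun ξ => k₂ * Real.exp (B * ξ) := funext hφ
  set μ₁ := (-r * B + Real.sqrt C) / r with hμ₁
  set μ₂ := (-r * B - Real.sqrt C) / r with hμ₂
  have hhe : h = fun ξ => c₁ * Real.exp (μ₁ * ξ) + c₂ * Real.exp (μ₂ * ξ) := funext hh
  rw [hfe, hφe, hhe, dexp, dexp, dexp, dexp, dexp2, dexp2]
  have hs : Real.sqrt C ^ 2 = C := Real.sq_sqrt hCnonneg
  have hr' : r ≠ 0 := ne_of_gt hr
  have h1 : -r * μ₁ ^ 2 - 2 * r * B * μ₁ +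
      ((n - 2 : ℝ) * B ^ 2 - m * A ^ 2 - 2 * m * A * B) = 0 := by
    rw [hμ₁]
    field_simp
    nlinarith [hs, hC]
  have h2 : -r * μ₂ ^ 2 - 2 * r * B * μ₂ +
      ((n - 2 : ℝ) * B ^ 2 - m * A ^ 2 - 2 * m * A * B) = 0 := by
    rw [hμ₂]
    field_simp
    nlinarith [hs, hC]
  simp only
  linear_combination (k₁ * Real.exp (A * ξ) * (k₂ * Real.exp (B * ξ)) * c₁ * Real.exp (μ₁ * ξ)) * h1
    + (k₁ * Real.exp (A * ξ) * (k₂ * Real.exp (B * ξ)) * c₂ * Real.exp (μ₂ * ξ)) * h2
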